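/- If S* = ∩_D {x : Ax ≤ b(D)} is nonempty and the database space is connected under the neighboring relation, then any (ε, 0)-differentially private mechanism that satisfies the constraints Ax ≤ b(D) with probability 1 has, for every database D, output supported in S*; consequently its expected objective value E[g(μ(D))] is at most max_{x ∈ S*} g(x) when g is continuous and the max is attained. -/

import Mathlib

open MeasureTheory

/-- If `S* = ⋂_D {x : Ax ≤ b(D)}` is nonempty and the database space is
connected under the neighboring relation, then any `(ε, 0)`-DP mechanism satisfying the
constraints with probability 1 has, for every database, output supported in `S*`;
consequently its expected objective value is at most `max_{x ∈ S*} g(x)`. -/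
theorem pure_dp_supported_in_intersection
    {𝒳 : Type*} {m n : ℕ} (Neighbor : 𝒳 → 𝒳 → Prop)
    (A : Matrix (Fin m) (Fin n) ℝ) (b : 𝒳 → Fin m → ℝ) (ε : ℝ)
    (hS : (⋂ D : 𝒳, {x : Fin n → ℝ | ∀ i, A.mulVec x i ≤ b D i}).Nonempty)
    (hconn : ∀ D D' : 𝒳, Relation.ReflTransGen Neighbor D D')
    (μ : 𝒳 → Measure (Fin n → ℝ)) (hprob : ∀ D, IsProbabilityMeasure (μ D))
    (hDP : ∀ D D', Neighbor D D' → ∀ V : Set (Fin n → ℝ), MeasurableSet V →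
      μ D V ≤ ENNReal.ofReal (Real.exp ε) * μ D' V)
    (hsat : ∀ D, μ D {x | ∀ i, A.mulVec x i ≤ b D i} = 1)
    (g : (Fin n → ℝ) → ℝ) (hg : Continuous g)
    (xmax : Fin n → ℝ)
    (hxmax : xmax ∈ ⋂ D : 𝒳, {x : Fin n → ℝ | ∀ i, A.mulVec x i ≤ b D i})
    (hxmax_max : ∀ x ∈ ⋂ D : 𝒳, {x : Fin n → ℝ | ∀ i, A.mulVec x i ≤ b D i},
      g x ≤ g xmax)
    (hint : ∀ D, Integrable g (μ D)) :
    ∀ D : 𝒳,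
      μ D (⋂ D' : 𝒳, {x : Fin n → ℝ | ∀ i, A.mulVec x i ≤ b D' i}) = 1 ∧
      (∫ x, g x ∂μ D) ≤ g xmax := by

  classical
  have hclosed : ∀ D : 𝒳, IsClosed {x : Fin n → ℝ | ∀ i, A.mulVec x i ≤ b D i} := by
    intro D
    have h : {x : Fin n → ℝ | ∀ i, A.mulVec x i ≤ b D i}
        = ⋂ i, {x : Fin n → ℝ | A.mulVec x i ≤ b D i} := by
      ext x; simp [Set.mem_iInter]
    rw [h]
    refine isClosed_iInter fun i => isClosed_le ?_ continuous_const
    simp only [Matrix.mulVec, dotProduct]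
    exact continuous_finset_sum _ fun j _ => continuous_const.mul (continuous_apply j)
  have hnull : ∀ D D', Relation.ReflTransGen Neighbor D D' →
      ∀ V : Set (Fin n → ℝ), MeasurableSet V → μ D' V = 0 → μ D V = 0 := by
    intro D D' h
    induction h with
    | refl => exact fun V _ h0 => h0
    | tail hab hbc ih =>
      intro V hV h0
      refine ih V hV ?_
      have h1 := hDP _ _ hbc V hV
      rw [h0, mul_zero] at h1
      exact le_antisymm h1 zero_le
  have key : ∀ D D' : 𝒳, μ D {x : Fin n → ℝ | ∀ i, A.mulVec x i ≤ b D' i}ᶜ = 0 := by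
    intro D D'
    refine hnull D D' (hconn D D') _ (hclosed D').measurableSet.compl ?_
    haveI := hprob D'
    rw [prob_compl_eq_zero_iff (hclosed D').measurableSet]
    exact hsat D'
  intro D
  haveI := hprob D
  have hmain : μ D (⋂ D' : 𝒳, {x : Fin n → ℝ | ∀ i, A.mulVec x i ≤ b D' i}) = 1 := by
    rw [← prob_compl_eq_zero_iff
      (isClosed_iInter fun D' => hclosed D').measurableSet, Set.compl_iInter]
    obtain ⟨t, htc, hteq⟩ := TopologicalSpace.isOpen_iUnion_countable
      (fun D' : 𝒳 => {x : Fin n → ℝ | ∀ i, A.mulVec x i ≤ b D' i}ᶜ)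
      (fun D' => (hclosed D').isOpen_compl)
    rw [← hteq]
    exact (measure_biUnion_null_iff htc).2 fun D' _ => key D D'
  refine ⟨hmain, ?_⟩
  have hae : ∀ᵐ x ∂μ D, g x ≤ g xmax := by
    refine measure_mono_null
      (t := (⋂ D' : 𝒳, {x : Fin n → ℝ | ∀ i, A.mulVec x i ≤ b D' i})ᶜ)
      (fun x hx => Set.mem_compl fun hmem => hx (hxmax_max x hmem)) ?_
    rw [prob_compl_eq_zero_iff
      (isClosed_iInter fun D' => hclosed D').measurableSet]
    exact hmain
  calc ∫ x, g x ∂μ D ≤ ∫ _x, g xmax ∂μ D :=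
        integral_mono_ae (hint D) (integrable_const _) hae
    _ = g xmax := by simp
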